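/- arXiv:1107.0733 — 3 statements merged into one kernel-verified Lean document; each statement's English description precedes it below -/
import Mathlib

section
/- Let β0, β2, β3, β4, β5, w be elements of an integral domain of characteristic 0, and set a1 = β5, a2 = β4*w, a3 = β3*w^2, a4 = β2*w^3, a6 = β0*w^5. Then the discriminant Δ of the associated Weierstrass equation (defined via Deligne's formulaire) is divisible by w^5. -/
/-- For the SU(5) specialization `a1 = β5, a2 = β4 w, a3 = β3 w², a4 = β2 w³, a6 = β0 w⁵`,
the discriminant `Δ` of the Weierstrass equation is divisible by `w⁵`.
(Since `Δ` involves the coefficient `1/4`, it is characterized here by the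
equivalent integral relation `4 Δ = -b2²(b2 b6 - b4²) - 32 b4³ - 108 b6² + 36 b2 b4 b6`.) -/
theorem stmt_3 {R : Type*} [CommRing R] [IsDomain R] [CharZero R]
    (β0 β2 β3 β4 β5 w a1 a2 a3 a4 a6 b2 b4 b6 Δ : R)
    (ha1 : a1 = β5) (ha2 : a2 = β4 * w) (ha3 : a3 = β3 * w ^ 2)
    (ha4 : a4 = β2 * w ^ 3) (ha6 : a6 = β0 * w ^ 5)
    (hb2 : b2 = a1 ^ 2 + 4 * a2)
    (hb4 : b4 = a1 * a3 + 2 * a4)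
    (hb6 : b6 = a3 ^ 2 + 4 * a6)
    (hΔ : 4 * Δ = -(b2 ^ 2 * (b2 * b6 - b4 ^ 2)) - 32 * b4 ^ 3 - 108 * b6 ^ 2
        + 36 * b2 * b4 * b6) :
    w ^ 5 ∣ Δ := by
  refine ⟨-β3^2*β4*β5^4 - 8*β3^2*β4^2*β5^2*w - 16*β3^2*β4^3*w^2 + β3^3*β5^3*w
    + 36*β3^3*β4*β5*w^2 - 27*β3^4*w^3 + β2*β3*β5^5 + 8*β2*β3*β4*β5^3*w
    + 16*β2*β3*β4^2*β5*w^2 - 30*β2*β3^2*β5^2*w^2 + 72*β2*β3^2*β4*w^3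
    + β2^2*β5^4*w + 8*β2^2*β4*β5^2*w^2 + 16*β2^2*β4^2*w^3 - 96*β2^2*β3*β5*w^3
    - 64*β2^3*w^4 - β0*β5^6 - 12*β0*β4*β5^4*w - 48*β0*β4^2*β5^2*w^2
    - 64*β0*β4^3*w^3 + 36*β0*β3*β5^3*w^2 + 144*β0*β3*β4*β5*w^3 - 216*β0*β3^2*w^4
    + 72*β0*β2*β5^2*w^3 + 288*β0*β2*β4*w^4 - 432*β0^2*w^5, ?_⟩
  have h4 : (4 : R) ≠ 0 := by norm_num
  apply mul_left_cancel₀ h4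
  subst ha1 ha2 ha3 ha4 ha6 hb2 hb4 hb6
  rw [hΔ]; ring
end

section
/- With the SU(5) specialization a1 = β5, a2 = β4*w, a3 = β3*w^2, a4 = β2*w^3, a6 = β0*w^5 (over a polynomial ring in β0,β2,β3,β4,β5,w over Q), write Δ = -w^5 * Δ'. Then Δ' is congruent to β5^4 * P modulo the ideal (w), where P = β3^2*β4 - β2*β3*β5 + β0*β5^2. Equivalently, Δ + w^5*β5^4*P ∈ (w^6). -/
open MvPolynomial in
/-- For the SU(5) model over `ℚ[β0,β2,β3,β4,β5,w]`, writing `Δ = -w⁵ Δ'`, the factor `Δ'`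
is congruent to `β5⁴ P` modulo `(w)`, where `P = β3²β4 - β2β3β5 + β0β5²`;
equivalently `Δ + w⁵ β5⁴ P ∈ (w⁶)`. -/
theorem stmt_4 :
    let β0 : MvPolynomial (Fin 6) ℚ := X 0
    let β2 : MvPolynomial (Fin 6) ℚ := X 1
    let β3 : MvPolynomial (Fin 6) ℚ := X 2
    let β4 : MvPolynomial (Fin 6) ℚ := X 3
    let β5 : MvPolynomial (Fin 6) ℚ := X 4
    let w : MvPolynomial (Fin 6) ℚ := X 5
    let a1 := β5
    let a2 := β4 * w
    let a3 := β3 * w ^ 2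
    let a4 := β2 * w ^ 3
    let a6 := β0 * w ^ 5
    let b2 := a1 ^ 2 + 4 * a2
    let b4 := a1 * a3 + 2 * a4
    let b6 := a3 ^ 2 + 4 * a6
    let Δ := -(C (1 / 4 : ℚ)) * b2 ^ 2 * (b2 * b6 - b4 ^ 2) - 8 * b4 ^ 3 - 27 * b6 ^ 2
        + 9 * b2 * b4 * b6
    let P := β3 ^ 2 * β4 - β2 * β3 * β5 + β0 * β5 ^ 2
    Δ + w ^ 5 * β5 ^ 4 * P ∈ Ideal.span {w ^ 6} := by
  intro β0 β2 β3 β4 β5 w a1 a2 a3 a4 a6 b2 b4 b6 Δ P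
  rw [Ideal.mem_span_singleton]
  have h : (4 : MvPolynomial (Fin 6) ℚ) * C (1/4 : ℚ) = 1 := by
    rw [← map_ofNat (C : ℚ →+* MvPolynomial (Fin 6) ℚ) 4, ← map_mul]
    norm_num
  refine ⟨(-8)*β3^2*β4^2*β5^2 + (-16)*β3^2*β4^3*w + 1*β3^3*β5^3 + 36*β3^3*β4*β5*w + (-27)*β3^4*w^2 + 8*β2*β3*β4*β5^3 + 16*β2*β3*β4^2*β5*w + (-30)*β2*β3^2*β5^2*w + 72*β2*β3^2*β4*w^2 + 1*β2^2*β5^4 + 8*β2^2*β4*β5^2*w + 16*β2^2*β4^2*w^2 + (-96)*β2^2*β3*β5*w^2 + (-64)*β2^3*w^3 + (-12)*β0*β4*β5^4 + (-48)*β0*β4^2*β5^2*w + (-64)*β0*β4^3*w^2 + 36*β0*β3*β5^3*w + 144*β0*β3*β4*β5*w^2 + (-216)*β0*β3^2*w^3 + 72*β0*β2*β5^2*w^2 + 288*β0*β2*β4*w^3 + (-432)*β0^2*w^4, ?_⟩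
  simp only [Δ, P, b2, b4, b6, a1, a2, a3, a4, a6, β0, β2, β3, β4, β5, w]
  linear_combination ((-1)*β3^2*β4*β5^4*w^5 + (-8)*β3^2*β4^2*β5^2*w^6 + (-16)*β3^2*β4^3*w^7 + 1*β2*β3*β5^5*w^5 + 8*β2*β3*β4*β5^3*w^6 + 16*β2*β3*β4^2*β5*w^7 + 1*β2^2*β5^4*w^6 + 8*β2^2*β4*β5^2*w^7 + 16*β2^2*β4^2*w^8 + (-1)*β0*β5^6*w^5 + (-12)*β0*β4*β5^4*w^6 + (-48)*β0*β4^2*β5^2*w^7 + (-64)*β0*β4^3*w^8) * h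
end

section
/- Let B12 ⊂ ℂ^5 × ℙ^1 × ℙ^1 be defined by u1*α₊ - σ₊*v1 = 0, u2*α₋ - σ₋*v2 = 0, α₊*α₋ - σ₊*σ₋*u3 = 0, and let π : B12 → ℂ^5 be the projection. Then the fiber of π over the origin (0,0,0,0,0) is exactly the subvariety {α₊*α₋ = 0} ⊂ ℙ^1 × ℙ^1, which equals the union of the two lines {[0:1]} × ℙ^1 and ℙ^1 × {[0:1]}; these two lines intersect in exactly one point, ([0:1],[0:1]). -/
/-- The fiber of the small resolution `B₁₂` over the origin of `ℂ⁵` is exactly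
`{α₊ α₋ = 0} ⊂ ℙ¹ × ℙ¹`, the union of the two rulings `{α₊ = 0}` and `{α₋ = 0}`,
which meet in exactly the single point `([0:1],[0:1])` (stated in terms of homogeneous
coordinates `(α₊,σ₊)`, `(α₋,σ₋)`). -/
theorem stmt_14 :
    (∀ αp σp αm σm : ℂ,
      ((0 : ℂ) * αp - σp * 0 = 0 ∧ (0 : ℂ) * αm - σm * 0 = 0 ∧
        αp * αm - σp * σm * 0 = 0) ↔ αp * αm = 0) ∧
    (∀ αp αm : ℂ, αp * αm = 0 ↔ (αp = 0 ∨ αm = 0)) ∧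
    (∀ αp σp αm σm : ℂ, (αp, σp) ≠ (0, 0) → (αm, σm) ≠ (0, 0) →
      αp = 0 → αm = 0 →
      ∃ c d : ℂ, c ≠ 0 ∧ d ≠ 0 ∧ (αp, σp) = (c * 0, c * 1) ∧ (αm, σm) = (d * 0, d * 1)) := by
  refine ⟨fun αp σp αm σm => by constructor <;> intro h <;> simp_all,
    fun αp αm => mul_eq_zero, ?_⟩
  intro αp σp αm σm hp hm hαp hαm
  refine ⟨σp, σm, ?_, ?_, by simp [hαp], by simp [hαm]⟩
  · intro h; exact hp (by simp [hαp, h])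
  · intro h; exact hm (by simp [hαm, h])
end
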